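/- Let t(s) = s^3 + s^2 - s. Then every s > 0 with t(s) < t(0) exists (e.g. t(1/3) = -5/27 < 0), the infimum of t over s ≥ 0 equals -5/27 attained at s = 1/3, and t(s) → -∞ as s → -∞. Consequently, there exists σ > 0 such that the global minimizer of m_σ(s) = t(s) + (σ/4)|s|^4 over ℝ is negative, i.e. the global minimizer of the regularized model is not a descent direction (t'(0) = -1 < 0 means positive s are descent directions). -/
import Mathlib


open Filter

theorem stmt_0 :
    (∃ s : ℝ, 0 < s ∧ (s^3 + s^2 - s) < ((0:ℝ)^3 + (0:ℝ)^2 - 0)) ∧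
    ((1/3:ℝ)^3 + (1/3:ℝ)^2 - (1/3:ℝ) = -5/27) ∧
    IsLeast ((fun s : ℝ => s^3 + s^2 - s) '' Set.Ici 0) (-5/27) ∧
    Tendsto (fun s : ℝ => s^3 + s^2 - s) atBot atBot ∧
    (∃ σ : ℝ, 0 < σ ∧ ∀ s : ℝ,
      (∀ x : ℝ, s^3 + s^2 - s + σ/4 * |s|^4 ≤ x^3 + x^2 - x + σ/4 * |x|^4) → s < 0) := by
  refine ⟨⟨1/3, by norm_num, by norm_num⟩, by norm_num, ?_, ?_, ?_⟩
  · constructor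
    · exact ⟨1/3, by norm_num, by norm_num⟩
    · rintro y ⟨x, hx, rfl⟩
      simp only [Set.mem_Ici] at hx
      nlinarith [sq_nonneg (3*x - 1), sq_nonneg x]
  · apply tendsto_atBot_mono' _ _ tendsto_id
    filter_upwards [eventually_le_atBot (-2 : ℝ)] with s hs
    simp only [id_eq]
    nlinarith [mul_nonneg (mul_nonneg (by linarith : (0:ℝ) ≤ -s) (by linarith : (0:ℝ) ≤ -(s+2))) (by linarith : (0:ℝ) ≤ 1 - s)]
  · refine ⟨1/100, by norm_num, fun s hmin => ?_⟩
    by_contra h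
    push_neg at h
    have h2 := hmin (-2)
    have habs2 : |(-2 : ℝ)| = 2 := by norm_num
    rw [habs2] at h2
    have habs : |s| = s := abs_of_nonneg h
    rw [habs] at h2
    nlinarith [sq_nonneg (3*s - 1), sq_nonneg s, pow_nonneg h 4]
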